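/- Let f : ℝ^d → ℝ be differentiable, let x^0, x^1, …, x^p ∈ ℝ^d, and let f̃(x^0), …, f̃(x^p) ∈ ℝ be given values. Let m(x) = c + gᵀx + (1/2)xᵀHx be a quadratic polynomial with H symmetric satisfying m(x^i) = f̃(x^i) for every i = 0, 1, …, p. Then for every x ∈ ℝ^d and every i ∈ {1, …, p}, the following identity holds: (x^i − x^0)ᵀ(∇m(x) − ∇f(x)) + (1/2)(x^i − x)ᵀH(x^i − x) − (1/2)(x^0 − x)ᵀH(x^0 − x) = (f̃(x^i) − f(x^i)) − (f̃(x^0) − f(x^0)) − [f(x) + ∇f(x)ᵀ(x^i − x) − f(x^i)] + [f(x) + ∇f(x)ᵀ(x^0 − x) − f(x^0)]. -/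

import Mathlib

noncomputable section

open scoped RealInnerProductSpace
open Matrix InnerProductSpace

lemma gradient_quadratic {d : ℕ} (c : ℝ) (g : EuclideanSpace ℝ (Fin d))
    (H : Matrix (Fin d) (Fin d) ℝ) (hH : H.IsSymm)
    (m : EuclideanSpace ℝ (Fin d) → ℝ)
    (hm : ∀ y : EuclideanSpace ℝ (Fin d),
      m y = c + ⟪g, y⟫ + (1 / 2) * ⟪y, Matrix.toEuclideanLin H y⟫)
    (y : EuclideanSpace ℝ (Fin d)) :
    gradient m y = g + Matrix.toEuclideanLin H y := by
  set A : EuclideanSpace ℝ (Fin d) →L[ℝ] EuclideanSpace ℝ (Fin d) :=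
    LinearMap.toContinuousLinearMap (Matrix.toEuclideanLin H) with hA
  have hAapp : ∀ v : EuclideanSpace ℝ (Fin d), A v = Matrix.toEuclideanLin H v := fun v => rfl
  have hsym : ∀ u v : EuclideanSpace ℝ (Fin d), ⟪u, A v⟫ = ⟪A u, v⟫ := by
    have hherm : H.IsHermitian := by
      rw [Matrix.IsHermitian, Matrix.conjTranspose_eq_transpose_of_trivial]
      exact hH
    have hs := Matrix.isHermitian_iff_isSymmetric.mp hherm
    intro u v
    exact (hs u v).symm
  have hq : HasFDerivAt (fun t : EuclideanSpace ℝ (Fin d) => ⟪t, A t⟫)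
      ((fderivInnerCLM ℝ (y, A y)).comp
        ((ContinuousLinearMap.id ℝ (EuclideanSpace ℝ (Fin d))).prod A)) y :=
    (hasFDerivAt_id y).inner ℝ (A.hasFDerivAt)
  have hlin : HasFDerivAt (fun t : EuclideanSpace ℝ (Fin d) => ⟪g, t⟫) (innerSL ℝ g) y :=
    (innerSL ℝ g).hasFDerivAt
  have hm' : m = fun t => c + ⟪g, t⟫ + (1 / 2) * ⟪t, A t⟫ := by
    funext t; rw [hm t, hAapp]
  have hderiv : HasFDerivAt m
      (innerSL ℝ g + (1 / 2 : ℝ) •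
        ((fderivInnerCLM ℝ (y, A y)).comp
          ((ContinuousLinearMap.id ℝ (EuclideanSpace ℝ (Fin d))).prod A))) y := by
    rw [hm']
    have h := ((hlin.add (hq.const_mul (1 / 2 : ℝ))).const_add c)
    refine h.congr_of_eventuallyEq (Filter.Eventually.of_forall fun t => ?_)
    simp only [Pi.add_apply]; ring
  have hL : (innerSL ℝ g + (1 / 2 : ℝ) •
        ((fderivInnerCLM ℝ (y, A y)).comp
          ((ContinuousLinearMap.id ℝ (EuclideanSpace ℝ (Fin d))).prod A)))
      = toDual ℝ (EuclideanSpace ℝ (Fin d)) (g + Matrix.toEuclideanLin H y) := by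
    ext w
    simp only [ContinuousLinearMap.add_apply, ContinuousLinearMap.smul_apply,
      ContinuousLinearMap.coe_comp', Function.comp_apply, ContinuousLinearMap.prod_apply,
      ContinuousLinearMap.coe_id', id_eq, fderivInnerCLM_apply, toDual_apply_apply, innerSL_apply_apply,
      smul_eq_mul]
    rw [inner_add_left, ← hAapp y, hsym y w, real_inner_comm w (A y)]
    ring
  rw [hL] at hderiv
  exact (hasGradientAt_iff_hasFDerivAt.mpr hderiv).gradient

/-- The key algebraic identity for quadratic models interpolating noisy
function values: for each `i`, the projection of the model-gradient error onto the
displacement `x^i − x^0` equals a difference of noise terms plus differences of first-order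
Taylor remainders of `f`, corrected by quadratic terms in `H`. -/
theorem quadratic_interpolation_identity
    {d p : ℕ} (hp : 0 < p)
    (f : EuclideanSpace ℝ (Fin d) → ℝ)
    (hf : Differentiable ℝ f)
    (x : Fin (p + 1) → EuclideanSpace ℝ (Fin d))
    (ft : Fin (p + 1) → ℝ)
    (c : ℝ) (g : EuclideanSpace ℝ (Fin d)) (H : Matrix (Fin d) (Fin d) ℝ)
    (hH : H.IsSymm)
    (m : EuclideanSpace ℝ (Fin d) → ℝ)
    (hm : ∀ y : EuclideanSpace ℝ (Fin d),
      m y = c + ⟪g, y⟫ + (1 / 2) * ⟪y, Matrix.toEuclideanLin H y⟫)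
    (hinterp : ∀ i, m (x i) = ft i) :
    ∀ (y : EuclideanSpace ℝ (Fin d)) (i : Fin p),
      ⟪x i.succ - x 0, gradient m y - gradient f y⟫
        + (1 / 2) * ⟪x i.succ - y, Matrix.toEuclideanLin H (x i.succ - y)⟫
        - (1 / 2) * ⟪x 0 - y, Matrix.toEuclideanLin H (x 0 - y)⟫
      = (ft i.succ - f (x i.succ)) - (ft 0 - f (x 0))
        - (f y + ⟪gradient f y, x i.succ - y⟫ - f (x i.succ))
        + (f y + ⟪gradient f y, x 0 - y⟫ - f (x 0)) := by
  intro y i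
  rw [gradient_quadratic c g H hH m hm y]
  have hsym : ∀ u v : EuclideanSpace ℝ (Fin d),
      ⟪u, Matrix.toEuclideanLin H v⟫ = ⟪Matrix.toEuclideanLin H u, v⟫ := by
    have hherm : H.IsHermitian := by
      rw [Matrix.IsHermitian, Matrix.conjTranspose_eq_transpose_of_trivial]
      exact hH
    have hs := Matrix.isHermitian_iff_isSymmetric.mp hherm
    intro u v
    exact (hs u v).symm
  set u := x i.succ with hu
  set w := x 0 with hw
  set G := gradient f y with hG
  set A := Matrix.toEuclideanLin H with hA2
  have e1 : ft i.succ = c + ⟪g, u⟫ + (1 / 2) * ⟪u, A u⟫ := by rw [← hinterp i.succ, hm]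
  have e0 : ft 0 = c + ⟪g, w⟫ + (1 / 2) * ⟪w, A w⟫ := by rw [← hinterp 0, hm]
  have s1 : ⟪y, A u⟫ = ⟪u, A y⟫ := by rw [hsym y u, real_inner_comm]
  have s2 : ⟪y, A w⟫ = ⟪w, A y⟫ := by rw [hsym y w, real_inner_comm]
  have c1 : ⟪G, u⟫ = ⟪u, G⟫ := real_inner_comm _ _
  have c2 : ⟪G, w⟫ = ⟪w, G⟫ := real_inner_comm _ _
  have c3 : ⟪G, y⟫ = ⟪y, G⟫ := real_inner_comm _ _
  have d1 : ⟪u, g⟫ = ⟪g, u⟫ := real_inner_comm _ _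
  have d2 : ⟪w, g⟫ = ⟪g, w⟫ := real_inner_comm _ _
  simp only [map_sub, inner_sub_left, inner_sub_right, inner_add_right]
  linarith [e1, e0, s1, s2, c1, c2, c3, d1, d2]

end
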